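/- If \pi is chosen uniformly at random from the matchings in S_{2n}, then the expected value of the major index maj(\pi) = \sum_{i \in Des(\pi)} i is n^2. -/

import Mathlib

open Finset

/-- A matching (fixed point free involution). -/
def IsMatching {m : ℕ} (π : Equiv.Perm (Fin m)) : Prop :=
  π * π = 1 ∧ ∀ i, π i ≠ i

instance {m : ℕ} (π : Equiv.Perm (Fin m)) : Decidable (IsMatching π) := by
  unfold IsMatching; infer_instance

/-- The set of matchings in `S_{2n}`. -/
def matchings (n : ℕ) : Finset (Equiv.Perm (Fin (2 * n))) :=
  Finset.univ.filter IsMatching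

/-- Descent set (0-based indices `i` with `π i > π (i+1)`). -/
def desSet {m : ℕ} (π : Equiv.Perm (Fin m)) : Finset (Fin m) :=
  Finset.univ.filter fun i =>
    if h : (i : ℕ) + 1 < m then π ⟨(i : ℕ) + 1, h⟩ < π i else False

/-- Descent number `d(π) = |Des(π)| + 1`. -/
def desNum {m : ℕ} (π : Equiv.Perm (Fin m)) : ℕ := (desSet π).card + 1

/-- Major index: sum of the (1-based) descent positions. -/
def maj {m : ℕ} (π : Equiv.Perm (Fin m)) : ℕ := ∑ i ∈ desSet π, ((i : ℕ) + 1)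

/-- The double factorial `(2n-1)!! = ∏_{i=1}^n (2i-1)`. -/
def doubleFac (n : ℕ) : ℕ := ∏ i ∈ Finset.range n, (2 * i + 1)

lemma mem_matchings {n : ℕ} {π : Equiv.Perm (Fin (2*n))} :
    π ∈ matchings n ↔ π * π = 1 ∧ ∀ i, π i ≠ i := by
  simp [matchings, IsMatching]

lemma conj_mem {n : ℕ} (σ : Equiv.Perm (Fin (2*n))) {π : Equiv.Perm (Fin (2*n))}
    (h : π ∈ matchings n) : σ * π * σ⁻¹ ∈ matchings n := by
  rw [mem_matchings] at h ⊢
  obtain ⟨h1, h2⟩ := h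
  constructor
  · calc σ * π * σ⁻¹ * (σ * π * σ⁻¹) = σ * (π * π) * σ⁻¹ := by group
    _ = 1 := by rw [h1]; group
  · intro i hi
    apply h2 (σ⁻¹ i)
    have h3 : σ (π (σ⁻¹ i)) = i := hi
    have h4 := congrArg σ.symm h3
    simpa using h4

lemma apply_apply_of_mem {n : ℕ} {π : Equiv.Perm (Fin (2*n))} (h : π ∈ matchings n)
    (i : Fin (2*n)) : π (π i) = i := by
  rw [mem_matchings] at h
  have := congrArg (fun p => p.toFun i) h.1
  simpa using this

lemma card_fiber_eq {n : ℕ} {i j k l : Fin (2*n)} (hij : i ≠ j) (hkl : k ≠ l) :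
    ((matchings n).filter (fun π => π i = j)).card
      = ((matchings n).filter (fun π => π k = l)).card := by
  -- choose σ with σ i = k, σ j = l
  obtain ⟨σ, hσi, hσj⟩ : ∃ σ : Equiv.Perm (Fin (2*n)), σ i = k ∧ σ j = l := by
    refine ⟨Equiv.swap (Equiv.swap i k j) l * Equiv.swap i k, ?_, ?_⟩
    · simp only [Equiv.Perm.mul_apply, Equiv.swap_apply_left]
      rw [Equiv.swap_apply_of_ne_of_ne]
      · intro h
        have h2 : Equiv.swap i k i = Equiv.swap i k j := by rw [Equiv.swap_apply_left]; exact h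
        exact hij ((Equiv.swap i k).injective h2)
      · exact hkl
    · simp only [Equiv.Perm.mul_apply]
      exact Equiv.swap_apply_left _ _
  apply Finset.card_bij' (fun π _ => σ * π * σ⁻¹) (fun π _ => σ⁻¹ * π * σ)
  · intro π hπ
    rw [Finset.mem_filter] at hπ ⊢
    refine ⟨conj_mem σ hπ.1, ?_⟩
    have : σ (π (σ⁻¹ k)) = σ (π i) := by rw [← hσi]; simp
    simp only [Equiv.Perm.mul_apply]
    calc σ (π (σ⁻¹ k)) = σ (π i) := this
    _ = l := by rw [hπ.2, hσj]
  · intro π hπ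
    rw [Finset.mem_filter] at hπ ⊢
    have h1 : σ⁻¹ * π * σ = σ⁻¹ * π * (σ⁻¹)⁻¹ := by simp
    refine ⟨h1 ▸ conj_mem σ⁻¹ hπ.1, ?_⟩
    show σ⁻¹ (π (σ i)) = j
    rw [hσi, hπ.2, ← hσj]; simp
  · intro π _; group
  · intro π _; group

lemma card_fiber_mul {n : ℕ} {i j : Fin (2*n)} (hij : i ≠ j) :
    (2*n - 1) * ((matchings n).filter (fun π => π i = j)).card = (matchings n).card := by
  have hM : (matchings n).card = ∑ b ∈ Finset.univ, ((matchings n).filter (fun π => π i = b)).card :=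
    Finset.card_eq_sum_card_fiberwise (fun π _ => Finset.mem_univ (π i))
  rw [hM, ← Finset.sum_erase_add _ _ (Finset.mem_univ i)]
  have hzero : ((matchings n).filter (fun π => π i = i)).card = 0 := by
    rw [Finset.card_eq_zero]
    ext π
    simp only [Finset.mem_filter, Finset.notMem_empty, iff_false, not_and]
    intro hπ
    exact (mem_matchings.mp hπ).2 i
  rw [hzero, add_zero]
  have hcong : ∀ b ∈ Finset.univ.erase i, ((matchings n).filter (fun π => π i = b)).card
      = ((matchings n).filter (fun π => π i = j)).card := by
    intro b hb
    exact card_fiber_eq (Finset.ne_of_mem_erase hb).symm hij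
  rw [Finset.sum_congr rfl hcong]
  rw [Finset.sum_const, smul_eq_mul]
  congr 1
  rw [Finset.card_erase_of_mem (Finset.mem_univ i)]
  simp

lemma mem_desSet {m : ℕ} {π : Equiv.Perm (Fin m)} {i : Fin m} (h : (i : ℕ) + 1 < m) :
    i ∈ desSet π ↔ π ⟨(i : ℕ) + 1, h⟩ < π i := by
  simp only [desSet, Finset.mem_filter, Finset.mem_univ, true_and, dif_pos h]

lemma not_mem_desSet {m : ℕ} {π : Equiv.Perm (Fin m)} {i : Fin m} (h : ¬ ((i : ℕ) + 1 < m)) :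
    i ∉ desSet π := by
  simp only [desSet, Finset.mem_filter, Finset.mem_univ, true_and, dif_neg h, not_false_iff]

lemma two_mul_descent_card {n : ℕ} {i : Fin (2*n)} (h : (i : ℕ) + 1 < 2*n) :
    2 * ((matchings n).filter (fun π => π ⟨(i : ℕ)+1, h⟩ < π i)).card
      = (matchings n).card + ((matchings n).filter (fun π => π i = ⟨(i : ℕ)+1, h⟩)).card := by
  set b : Fin (2*n) := ⟨(i : ℕ)+1, h⟩ with hb
  have hib : i ≠ b := by
    intro hx
    have : (i : ℕ) = (i : ℕ) + 1 := congrArg Fin.val hx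
    omega
  have hilt : i < b := by
    rw [Fin.lt_def]; simp [hb]
  set s := matchings n with hs
  -- fact (1): π i = b implies descent
  have fact1 : ∀ π ∈ s, π i = b → π b < π i := by
    intro π hπ he
    have : π b = i := by rw [← he, apply_apply_of_mem hπ]
    rw [this, he]
    exact hilt
  -- split filter d by e
  have split1 : (s.filter (fun π => π b < π i)).card
      = (s.filter (fun π => π i = b)).card
        + (s.filter (fun π => ¬ π i = b ∧ π b < π i)).card := by
    rw [← Finset.card_filter_add_card_filter_not
      (s := s.filter (fun π => π b < π i)) (p := fun π => π i = b)]
    congr 1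
    · congr 1
      ext π
      simp only [Finset.mem_filter, and_assoc]
      constructor
      · rintro ⟨h1, h2, h3⟩; exact ⟨h1, h3⟩
      · rintro ⟨h1, h3⟩; exact ⟨h1, fact1 π h1 h3, h3⟩
    · congr 1
      ext π
      simp only [Finset.mem_filter]
      tauto
  have split2 : s.card
      = (s.filter (fun π => π i = b)).card
        + ((s.filter (fun π => ¬ π i = b ∧ π b < π i)).card
          + (s.filter (fun π => ¬ π i = b ∧ ¬ π b < π i)).card) := by
    rw [← Finset.card_filter_add_card_filter_not (s := s) (p := fun π => π i = b)]
    congr 1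
    rw [← Finset.card_filter_add_card_filter_not
      (s := s.filter (fun π => ¬ π i = b)) (p := fun π => π b < π i)]
    congr 1 <;> · congr 1; ext π; simp only [Finset.mem_filter]; tauto
  -- the toggle bijection
  have conjprops : ∀ π ∈ s, ¬ π i = b →
      (Equiv.swap i b * π * Equiv.swap i b) i = π b
        ∧ (Equiv.swap i b * π * Equiv.swap i b) b = π i := by
    intro π hπ he
    have hπb_ne_b : π b ≠ b := (mem_matchings.mp hπ).2 b
    have hπb_ne_i : π b ≠ i := by
      intro hx
      apply he
      rw [← hx, apply_apply_of_mem hπ]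
    have hπi_ne_i : π i ≠ i := (mem_matchings.mp hπ).2 i
    constructor
    · show Equiv.swap i b (π (Equiv.swap i b i)) = π b
      rw [Equiv.swap_apply_left, Equiv.swap_apply_of_ne_of_ne hπb_ne_i hπb_ne_b]
    · show Equiv.swap i b (π (Equiv.swap i b b)) = π i
      rw [Equiv.swap_apply_right, Equiv.swap_apply_of_ne_of_ne hπi_ne_i he]
  have conjmem : ∀ π ∈ s, Equiv.swap i b * π * Equiv.swap i b ∈ s := by
    intro π hπ
    have := conj_mem (Equiv.swap i b) (hs ▸ hπ)
    rwa [Equiv.swap_inv] at this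
  have bij : (s.filter (fun π => ¬ π i = b ∧ π b < π i)).card
      = (s.filter (fun π => ¬ π i = b ∧ ¬ π b < π i)).card := by
    apply Finset.card_bij' (fun π _ => Equiv.swap i b * π * Equiv.swap i b)
      (fun π _ => Equiv.swap i b * π * Equiv.swap i b)
    · intro π hπ
      rw [Finset.mem_filter] at hπ ⊢
      obtain ⟨hπs, he, hd⟩ := hπ
      obtain ⟨c1, c2⟩ := conjprops π hπs he
      refine ⟨conjmem π hπs, ?_, ?_⟩
      · rw [c1]; exact (mem_matchings.mp hπs).2 b
      · rw [c1, c2]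
        exact not_lt.mpr (le_of_lt hd)
    · intro π hπ
      rw [Finset.mem_filter] at hπ ⊢
      obtain ⟨hπs, he, hd⟩ := hπ
      obtain ⟨c1, c2⟩ := conjprops π hπs he
      refine ⟨conjmem π hπs, ?_, ?_⟩
      · rw [c1]; exact (mem_matchings.mp hπs).2 b
      · rw [c1, c2]
        have hne : π b ≠ π i := fun hx => hib (π.injective hx.symm)
        rcases lt_or_gt_of_ne hne with h1 | h1
        · exact absurd h1 hd
        · exact h1
    · intro π _
      calc Equiv.swap i b * (Equiv.swap i b * π * Equiv.swap i b) * Equiv.swap i b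
          = (Equiv.swap i b * Equiv.swap i b) * π * (Equiv.swap i b * Equiv.swap i b) := by group
        _ = π := by rw [Equiv.swap_mul_self]; group
    · intro π _
      calc Equiv.swap i b * (Equiv.swap i b * π * Equiv.swap i b) * Equiv.swap i b
          = (Equiv.swap i b * Equiv.swap i b) * π * (Equiv.swap i b * Equiv.swap i b) := by group
        _ = π := by rw [Equiv.swap_mul_self]; group
  omega

lemma matchings_nonempty {n : ℕ} : (matchings n).Nonempty := by
  have hf : ∀ v : Fin (2*n), (if (v:ℕ) % 2 = 0 then (v:ℕ) + 1 else (v:ℕ) - 1) < 2*n := by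
    intro v
    have := v.isLt
    split <;> omega
  set f : Fin (2*n) → Fin (2*n) := fun v => ⟨_, hf v⟩ with hfdef
  have hinv : Function.Involutive f := by
    intro v
    apply Fin.ext
    simp only [hfdef]
    split <;> split <;> omega
  refine ⟨hinv.toPerm, ?_⟩
  rw [mem_matchings]
  constructor
  · ext x
    simp only [Equiv.Perm.mul_apply, Equiv.Perm.one_apply, Function.Involutive.coe_toPerm]
    have hx := x.isLt
    exact congrArg Fin.val (hinv x)
  · intro v hv
    have : (f v : ℕ) = (v : ℕ) := congrArg Fin.val hv
    simp only [hfdef] at this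
    split at this <;> omega

lemma sum_maj_eq {n : ℕ} :
    ∑ π ∈ matchings n, maj π
      = ∑ i : Fin (2*n), ((i : ℕ) + 1)
          * ((matchings n).filter (fun π => i ∈ desSet π)).card := by
  have h1 : ∀ π : Equiv.Perm (Fin (2*n)), maj π
      = ∑ i : Fin (2*n), (if i ∈ desSet π then (i : ℕ) + 1 else 0) := by
    intro π
    rw [maj, Finset.sum_ite_mem, Finset.univ_inter]
  rw [Finset.sum_congr rfl (fun π _ => h1 π), Finset.sum_comm]
  apply Finset.sum_congr rfl
  intro i _
  rw [← Finset.sum_filter, Finset.sum_const, smul_eq_mul, mul_comm]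

lemma sum_maj_val {n : ℕ} :
    ∑ π ∈ matchings n, maj π = n^2 * (matchings n).card := by
  rcases Nat.eq_zero_or_pos n with hn | hn
  · subst hn
    have : ∀ π ∈ matchings 0, maj π = 0 := by
      intro π _
      rw [maj, desSet]
      simp
    rw [Finset.sum_congr rfl this]
    simp
  set M := (matchings n).card with hM
  -- key per-index identity
  have key : ∀ i : Fin (2*n), 2 * ((2*n-1)
        * (((i : ℕ) + 1) * ((matchings n).filter (fun π => i ∈ desSet π)).card))
      = if (i : ℕ) + 1 < 2*n then ((i : ℕ) + 1) * (2*n*M) else 0 := by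
    intro i
    by_cases h : (i : ℕ) + 1 < 2*n
    · rw [if_pos h]
      have hdes : (matchings n).filter (fun π => i ∈ desSet π)
          = (matchings n).filter (fun π => π ⟨(i : ℕ)+1, h⟩ < π i) := by
        apply Finset.filter_congr
        intro π _
        simp only [mem_desSet h, eq_iff_iff]
      have hib : i ≠ (⟨(i : ℕ)+1, h⟩ : Fin (2*n)) := by
        intro hx
        have : (i : ℕ) = (i : ℕ) + 1 := congrArg Fin.val hx
        omega
      have h2 := two_mul_descent_card h
      have h3 := card_fiber_mul hib
      rw [hdes]
      calc 2 * ((2*n-1) * (((i : ℕ) + 1)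
            * ((matchings n).filter (fun π => π ⟨(i : ℕ)+1, h⟩ < π i)).card))
          = ((i : ℕ) + 1) * ((2*n-1)
            * (2 * ((matchings n).filter (fun π => π ⟨(i : ℕ)+1, h⟩ < π i)).card)) := by ring
        _ = ((i : ℕ) + 1) * ((2*n-1) * (M
            + ((matchings n).filter (fun π => π i = ⟨(i : ℕ)+1, h⟩)).card)) := by rw [h2]
        _ = ((i : ℕ) + 1) * ((2*n-1) * M + (2*n-1)
            * ((matchings n).filter (fun π => π i = ⟨(i : ℕ)+1, h⟩)).card) := by ring
        _ = ((i : ℕ) + 1) * ((2*n-1) * M + M) := by rw [h3]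
        _ = ((i : ℕ) + 1) * (2*n*M) := by
            congr 1
            have hx : (2*n-1)+1 = 2*n := by omega
            calc (2*n-1)*M + M = ((2*n-1)+1)*M := by ring
              _ = 2*n*M := by rw [hx]
    · rw [if_neg h]
      have : (matchings n).filter (fun π => i ∈ desSet π) = ∅ := by
        apply Finset.filter_false_of_mem
        intro π _
        exact not_mem_desSet h
      rw [this]
      simp
  obtain ⟨m, hm⟩ : ∃ m, 2*n = m + 1 := ⟨2*n-1, by omega⟩
  have hm' : 2*n - 1 = m := by omega
  have main : 2 * ((2*n-1) * (∑ π ∈ matchings n, maj π))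
      = 2 * ((2*n-1) * (n^2 * M)) := by
    rw [sum_maj_eq, Finset.mul_sum, Finset.mul_sum]
    rw [Finset.sum_congr rfl (fun i _ => key i)]
    rw [Fin.sum_univ_eq_sum_range (fun k => if k + 1 < 2*n then (k+1) * (2*n*M) else 0)]
    rw [hm']
    rw [hm, Finset.sum_range_succ, if_neg (by omega), add_zero]
    have hc : ∀ k ∈ Finset.range m, (if k + 1 < m+1 then (k+1) * ((m+1)*M) else 0)
        = (k+1) * ((m+1)*M) := by
      intro k hk
      rw [if_pos (Nat.succ_lt_succ (Finset.mem_range.mp hk))]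
    rw [Finset.sum_congr rfl hc, ← Finset.sum_mul]
    have gauss : (∑ k ∈ Finset.range m, (k+1)) = n * m := by
      have h0 : (∑ i ∈ Finset.range (m+1), i) = (∑ i ∈ Finset.range m, (i+1)) + 0 :=
        Finset.sum_range_succ' _ m
      have h1 := Finset.sum_range_id_mul_two (m+1)
      rw [h0, add_zero] at h1
      apply Nat.eq_of_mul_eq_mul_right (show 0 < 2 by omega)
      rw [h1]
      simp only [Nat.add_sub_cancel]
      calc (m+1) * m = 2*n*m := by rw [hm]
        _ = n * m * 2 := by ring
    rw [gauss]
    calc n * m * ((m+1) * M) = (m+1) * (m * (n * M)) := by ring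
      _ = 2*n * (m * (n*M)) := by rw [hm]
      _ = 2 * (m * (n^2 * M)) := by ring
  have h5 := Nat.eq_of_mul_eq_mul_left (show 0 < 2 by omega) main
  exact Nat.eq_of_mul_eq_mul_left (show 0 < 2*n-1 by omega) h5

theorem stmt9 (n : ℕ) :
    (∑ π ∈ matchings n, (maj π : ℚ)) / (matchings n).card = n ^ 2 := by
  have hM : ((matchings n).card : ℚ) ≠ 0 :=
    Nat.cast_ne_zero.mpr (Finset.card_ne_zero.mpr matchings_nonempty)
  rw [← Nat.cast_sum, sum_maj_val]
  push_cast
  exact mul_div_cancel_right₀ _ hM
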